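/- Fix λ ∈ (0,1) and ρ ∈ (0,1) with λ ≤ ρ. Then (1/2)·log((2πe)²) − ((1+λ)/2)·log((2πe)²(1−ρ²)) evaluated as f(1, ρ) satisfies f(1, ρ) ≥ (1/2)·log(1/(1−λ²)) − (λ/2)·log((2πe)²(1−ρ)²(1+λ)/(1−λ)), where f(s,q) = (1/2)·log((2πe)²s²) − ((1+λ)/2)·log((2πe)²s²(1−q²)). -/

import Mathlib

open Real

noncomputable def f12 (lam s q : ℝ) : ℝ :=
  (1/2) * Real.log ((2*π*Real.exp 1)^2 * s^2)
    - ((1+lam)/2) * Real.log ((2*π*Real.exp 1)^2 * s^2 * (1 - q^2))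

theorem stmt_12 (lam ρ : ℝ) (hlam : lam ∈ Set.Ioo (0:ℝ) 1) (hρ : ρ ∈ Set.Ioo (0:ℝ) 1)
    (hlr : lam ≤ ρ) :
    f12 lam 1 ρ ≥ (1/2) * Real.log (1/(1-lam^2))
      - (lam/2) * Real.log ((2*π*Real.exp 1)^2 * (1-ρ)^2 * (1+lam)/(1-lam)) := by
  obtain ⟨hl0, hl1⟩ := hlam
  obtain ⟨hr0, hr1⟩ := hρ
  have hpe : (0:ℝ) < 2*π*Real.exp 1 := by positivity
  have h1l : (0:ℝ) < 1 - lam := by linarith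
  have h1l' : (0:ℝ) < 1 + lam := by linarith
  have h1r : (0:ℝ) < 1 - ρ := by linarith
  have h1r' : (0:ℝ) < 1 + ρ := by linarith
  set A := Real.log (2*π*Real.exp 1) with hA
  set a := Real.log (1-lam) with ha
  set b := Real.log (1+lam) with hb
  set c := Real.log (1-ρ) with hc
  set d := Real.log (1+ρ) with hd
  have e1 : Real.log ((2*π*Real.exp 1)^2 * (1:ℝ)^2) = 2*A := by
    rw [one_pow, mul_one, Real.log_pow]; push_cast; ring
  have e2 : Real.log ((2*π*Real.exp 1)^2 * (1:ℝ)^2 * (1 - ρ^2)) = 2*A + c + d := by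
    have : (2*π*Real.exp 1)^2 * (1:ℝ)^2 * (1 - ρ^2) = (2*π*Real.exp 1)^2 * ((1-ρ)*(1+ρ)) := by
      ring
    rw [this, Real.log_mul (by positivity) (by positivity),
      Real.log_mul h1r.ne' h1r'.ne', Real.log_pow]
    push_cast; ring
  have e3 : Real.log (1/(1-lam^2)) = -(a+b) := by
    have : (1:ℝ) - lam^2 = (1-lam)*(1+lam) := by ring
    rw [this, one_div, Real.log_inv, Real.log_mul h1l.ne' h1l'.ne']
  have e4 : Real.log ((2*π*Real.exp 1)^2 * (1-ρ)^2 * (1+lam)/(1-lam)) = 2*A + 2*c + b - a := by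
    rw [Real.log_div (by positivity) h1l.ne',
      Real.log_mul (by positivity) h1l'.ne',
      Real.log_mul (by positivity) (by positivity),
      Real.log_pow, Real.log_pow]
    push_cast; ring
  -- key inequalities from log x ≤ x - 1
  have k1 : d - b ≤ (1+ρ)/(1+lam) - 1 := by
    have := Real.log_le_sub_one_of_pos (show (0:ℝ) < (1+ρ)/(1+lam) by positivity)
    rwa [Real.log_div h1r'.ne' h1l'.ne'] at this
  have k2 : c - a ≤ (1-ρ)/(1-lam) - 1 := by
    have := Real.log_le_sub_one_of_pos (show (0:ℝ) < (1-ρ)/(1-lam) by positivity)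
    rwa [Real.log_div h1r.ne' h1l.ne'] at this
  have k1' : (1+lam)*(d-b) ≤ ρ - lam := by
    have h := mul_le_mul_of_nonneg_left k1 h1l'.le
    have : (1+lam) * ((1+ρ)/(1+lam) - 1) = ρ - lam := by
      field_simp; ring
    linarith [this ▸ h]
  have k2' : (1-lam)*(c-a) ≤ lam - ρ := by
    have h := mul_le_mul_of_nonneg_left k2 h1l.le
    have : (1-lam) * ((1-ρ)/(1-lam) - 1) = lam - ρ := by
      field_simp; ring
    linarith [this ▸ h]
  unfold f12
  rw [e1, e2, e3, e4]
  nlinarith [k1', k2']
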